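/- arXiv:math/0105220 — 7 statements merged into one kernel-verified Lean document; each statement's English description precedes it below -/
import Mathlib

section
/- Let h ∈ ℂ. In Mat₃(ℂ), set T = I + hE₁₃, F₁ = E₂₁ − (h/2)E₂₃, F₂ = −(h/2)E₁₂ + E₃₂. Then (TF₁)²(TF₂) − 2(TF₁)(TF₂)(TF₁) + (TF₂)(TF₁)² = 0 and (TF₂)²(TF₁) − 2(TF₂)(TF₁)(TF₂) + (TF₁)(TF₂)² = 0. -/
open Matrix

lemma aux_T (h : ℂ) : (1 + h • single 0 2 1 : Matrix (Fin 3) (Fin 3) ℂ)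
    = !![1,0,h;0,1,0;0,0,1] := by
  ext i j; fin_cases i <;> fin_cases j <;>
    simp [Matrix.one_apply, Matrix.single, Matrix.vecHead, Matrix.vecTail]

lemma aux_F1 (h : ℂ) : (single 1 0 1 - (h / 2) • single 1 2 1 :
    Matrix (Fin 3) (Fin 3) ℂ) = !![0,0,0;1,0,-(h/2);0,0,0] := by
  ext i j; fin_cases i <;> fin_cases j <;>
    simp [Matrix.single, Matrix.vecHead, Matrix.vecTail]

lemma aux_F2 (h : ℂ) : (-((h / 2) • single 0 1 1) + single 2 1 1 :
    Matrix (Fin 3) (Fin 3) ℂ) = !![0,-(h/2),0;0,0,0;0,1,0] := by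
  ext i j; fin_cases i <;> fin_cases j <;>
    simp [Matrix.single, Matrix.vecHead, Matrix.vecTail]

set_option maxHeartbeats 2000000 in
theorem stmt_8 (h : ℂ)
    (T F₁ F₂ : Matrix (Fin 3) (Fin 3) ℂ)
    (hT : T = 1 + h • single 0 2 1)
    (hF₁ : F₁ = single 1 0 1 - (h / 2) • single 1 2 1)
    (hF₂ : F₂ = -((h / 2) • single 0 1 1) + single 2 1 1) :
    (T * F₁) * (T * F₁) * (T * F₂) - (2 : ℂ) • ((T * F₁) * (T * F₂) * (T * F₁))
        + (T * F₂) * ((T * F₁) * (T * F₁)) = 0 ∧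
      (T * F₂) * (T * F₂) * (T * F₁) - (2 : ℂ) • ((T * F₂) * (T * F₁) * (T * F₂))
        + (T * F₁) * ((T * F₂) * (T * F₂)) = 0 := by
  rw [hT, hF₁, hF₂, aux_T, aux_F1, aux_F2]
  constructor <;>
  · ext i j
    fin_cases i <;> fin_cases j <;>
      simp [Matrix.mul_fin_three, Matrix.vecHead, Matrix.vecTail]
    all_goals first | ring1 | (left; ring1)
end

section
/- Let h ∈ ℂ, h ≠ 0 not required. In Mat₃(ℂ), set T = I + hE₁₃, T⁻ = I − hE₁₃, H₃ = E₁₁ − E₃₃, F₁ = E₂₁ − (h/2)E₂₃, F₂ = −(h/2)E₁₂ + E₃₂, F₃ = E₃₁. Then [TF₂, TF₁] = T·(F₃ − (h/2)H₃TH₃ − (h/8)(T − T⁻)). -/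
open Matrix

theorem stmt_9 (h : ℂ)
    (T T' H₃ F₁ F₂ F₃ : Matrix (Fin 3) (Fin 3) ℂ)
    (hT : T = 1 + h • single 0 2 1)
    (hT' : T' = 1 - h • single 0 2 1)
    (hH₃ : H₃ = single 0 0 1 - single 2 2 1)
    (hF₁ : F₁ = single 1 0 1 - (h / 2) • single 1 2 1)
    (hF₂ : F₂ = -((h / 2) • single 0 1 1) + single 2 1 1)
    (hF₃ : F₃ = single 2 0 1) :
    (T * F₂) * (T * F₁) - (T * F₁) * (T * F₂) =
      T * (F₃ - (h / 2) • (H₃ * T * H₃) - (h / 8) • (T - T')) := by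
  subst hT hT' hH₃ hF₁ hF₂ hF₃
  ext i j
  fin_cases i <;> fin_cases j <;>
    simp [mul_apply, Fin.sum_univ_succ, single, Matrix.one_apply] <;> ring
end

section
/- Let h ∈ ℂ. In Mat₃(ℂ), set H₃' = −(E₁₁ − E₃₃), T' = −(I + hE₁₃), and F₃' = −E₃₁. Then [H₃', T'] = (T')² − I, [T', F₃'] = (h/2)(H₃'T' + T'H₃'), and [H₃', F₃'] = −(1/2)(T'F₃' + F₃'T' + (T')⁻¹F₃' + F₃'(T')⁻¹), where (T')⁻¹ = −(I − hE₁₃). -/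
open Matrix

set_option maxHeartbeats 1000000 in
theorem stmt_13 (h : ℂ)
    (H₃' T' Tinv F₃' : Matrix (Fin 3) (Fin 3) ℂ)
    (hH₃' : H₃' = -(Matrix.single 0 0 1 - Matrix.single 2 2 1))
    (hT' : T' = -(1 + h • Matrix.single 0 2 1))
    (hTinv : Tinv = -(1 - h • Matrix.single 0 2 1))
    (hF₃' : F₃' = -(Matrix.single 2 0 1)) :
    H₃' * T' - T' * H₃' = T' * T' - 1 ∧
      T' * F₃' - F₃' * T' = (h / 2) • (H₃' * T' + T' * H₃') ∧
      H₃' * F₃' - F₃' * H₃' =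
        -((1 / 2 : ℂ) • (T' * F₃' + F₃' * T' + Tinv * F₃' + F₃' * Tinv)) := by
  have e1 : H₃' = !![(-1:ℂ),0,0;0,0,0;0,0,1] := by
    subst hH₃'; ext i j
    fin_cases i <;> fin_cases j <;> simp [Matrix.single, vecHead, vecTail]
  have e2 : T' = !![(-1:ℂ),0,-h;0,-1,0;0,0,-1] := by
    subst hT'; ext i j
    fin_cases i <;> fin_cases j <;>
      simp [Matrix.single, one_apply, vecHead, vecTail]
  have e3 : Tinv = !![(-1:ℂ),0,h;0,-1,0;0,0,-1] := by
    subst hTinv; ext i j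
    fin_cases i <;> fin_cases j <;>
      simp [Matrix.single, one_apply, vecHead, vecTail]
  have e4 : F₃' = !![(0:ℂ),0,0;0,0,0;-1,0,0] := by
    subst hF₃'; ext i j
    fin_cases i <;> fin_cases j <;> simp [Matrix.single, vecHead, vecTail]
  subst e1 e2 e3 e4
  refine ⟨?_, ?_, ?_⟩ <;>
    · ext i j
      fin_cases i <;> fin_cases j <;>
        simp [mul_apply, one_apply, Fin.sum_univ_three, vecHead, vecTail] <;> ring
end

section
/- Let h ∈ ℂ. Define R ∈ Mat₃(ℂ) ⊗ Mat₃(ℂ) (equivalently a 9×9 matrix) by R = E₁₁⊗T + E₂₂⊗I + E₃₃⊗T⁻ + E₁₂⊗(2h·e₂) + E₂₃⊗(−2h·e₁) + E₁₃⊗(−h·h₃ + h²·e₃), where T = I + h·e₃, T⁻ = I − h·e₃, e₁ = E₁₂, e₂ = E₂₃, e₃ = E₁₃, h₃ = E₁₁ − E₃₃. Then R satisfies the triangularity condition R₂₁·R = I⊗I, where R₂₁ = P·R·P and P is the flip operator P(v⊗w) = w⊗v on ℂ³⊗ℂ³. -/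
open Matrix Kronecker

set_option maxHeartbeats 2000000 in
theorem stmt_14 (h : ℂ)
    (T T' e₁ e₂ e₃ h₃ : Matrix (Fin 3) (Fin 3) ℂ)
    (he₁ : e₁ = Matrix.single 0 1 1)
    (he₂ : e₂ = Matrix.single 1 2 1)
    (he₃ : e₃ = Matrix.single 0 2 1)
    (hh₃ : h₃ = Matrix.single 0 0 1 - Matrix.single 2 2 1)
    (hT : T = 1 + h • e₃) (hT' : T' = 1 - h • e₃)
    (R P : Matrix (Fin 3 × Fin 3) (Fin 3 × Fin 3) ℂ)
    (hR : R = Matrix.single 0 0 1 ⊗ₖ T + Matrix.single 1 1 1 ⊗ₖ (1 : Matrix (Fin 3) (Fin 3) ℂ)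
        + Matrix.single 2 2 1 ⊗ₖ T'
        + Matrix.single 0 1 1 ⊗ₖ ((2 * h) • e₂)
        + Matrix.single 1 2 1 ⊗ₖ (-((2 * h) • e₁))
        + Matrix.single 0 2 1 ⊗ₖ (-(h • h₃) + (h ^ 2) • e₃))
    (hP : P = Matrix.of fun p q : Fin 3 × Fin 3 =>
        if p.1 = q.2 ∧ p.2 = q.1 then (1 : ℂ) else 0) :
    (P * R * P) * R = 1 := by
  set σ : Equiv.Perm (Fin 3 × Fin 3) := Equiv.prodComm (Fin 3) (Fin 3) with hσ
  have hPσ : P = σ.toPEquiv.toMatrix := by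
    subst hP
    ext ⟨a,b⟩ ⟨c,d⟩
    simp [PEquiv.toMatrix, Equiv.toPEquiv, σ, Prod.ext_iff, and_comm, eq_comm]
  have hσσ : σ.symm = σ := rfl
  have hPRP : P * R * P = R.submatrix σ σ := by
    rw [hPσ, PEquiv.toMatrix_toPEquiv_mul, PEquiv.mul_toMatrix_toPEquiv, hσσ,
      Matrix.submatrix_submatrix]
    rfl
  rw [hPRP]
  have hRe : ∀ a b c d : Fin 3, R (a,b) (c,d) =
      (if a = 0 ∧ c = 0 then (if b = d then 1 else 0) + (if b = 0 ∧ d = 2 then h else 0) else 0)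
      + (if a = 1 ∧ c = 1 then (if b = d then (1:ℂ) else 0) else 0)
      + (if a = 2 ∧ c = 2 then (if b = d then 1 else 0) - (if b = 0 ∧ d = 2 then h else 0) else 0)
      + (if a = 0 ∧ c = 1 then (if b = 1 ∧ d = 2 then 2*h else 0) else 0)
      + (if a = 1 ∧ c = 2 then -(if b = 0 ∧ d = 1 then 2*h else 0) else 0)
      + (if a = 0 ∧ c = 2 then
          (-(if b = 0 ∧ d = 0 then h else 0) + (if b = 2 ∧ d = 2 then h else 0)
            + (if b = 0 ∧ d = 2 then h^2 else 0)) else 0) := by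
    intro a b c d
    subst he₁ he₂ he₃ hh₃ hT hT' hR
    fin_cases a <;> fin_cases b <;> fin_cases c <;> fin_cases d <;>
      norm_num [Matrix.single, Matrix.one_apply, Fin.ext_iff]
  ext ⟨i,j⟩ ⟨k,l⟩
  rw [Matrix.mul_apply, Fintype.sum_prod_type]
  simp only [Matrix.submatrix_apply, hσ, Equiv.prodComm_apply, Prod.swap_prod_mk,
    Fin.sum_univ_three, Matrix.one_apply, Prod.mk.injEq]
  fin_cases i <;> fin_cases j <;> fin_cases k <;> fin_cases l <;>
  · simp only [hRe]
    norm_num [Fin.ext_iff]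
    try ring
end

section
/- Let h ∈ ℂ. Define R ∈ Mat₃(ℂ) ⊗ Mat₃(ℂ) by R = E₁₁⊗T + E₂₂⊗I + E₃₃⊗T⁻ + E₁₂⊗(2h·e₂) + E₂₃⊗(−2h·e₁) + E₁₃⊗(−h·h₃ + h²·e₃), where T = I + h·e₃, T⁻ = I − h·e₃, e₁ = E₁₂, e₂ = E₂₃, e₃ = E₁₃, h₃ = E₁₁ − E₃₃. Then R satisfies the quantum Yang–Baxter equation R₁₂R₁₃R₂₃ = R₂₃R₁₃R₁₂ in Mat₃(ℂ)⊗Mat₃(ℂ)⊗Mat₃(ℂ), where R₁₂ = R⊗I, R₂₃ = I⊗R, and R₁₃ acts on the first and third factors. -/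
open Matrix Kronecker

abbrev I27 := Fin 3 × Fin 3 × Fin 3

def za1 : Matrix (Fin 3 × Fin 3) (Fin 3 × Fin 3) ℤ := Matrix.of fun p q =>
  if p = (0,0) ∧ q = (0,2) then 1 else if p = (0,0) ∧ q = (2,0) then -1 else if p = (0,1) ∧ q = (1,2) then 2 else if p = (0,2) ∧ q = (2,2) then 1 else if p = (1,0) ∧ q = (2,1) then -2 else if p = (2,0) ∧ q = (2,2) then -1 else 0
def za2 : Matrix (Fin 3 × Fin 3) (Fin 3 × Fin 3) ℤ := Matrix.of fun p q =>
  if p = (0,0) ∧ q = (2,2) then 1 else 0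
def zd1 : Matrix (Fin 3 × Fin 3 × Fin 3) (Fin 3 × Fin 3 × Fin 3) ℤ := Matrix.of fun p q =>
  if p = (0,0,0) ∧ q = (0,0,2) then 1 else if p = (0,0,0) ∧ q = (0,2,0) then 1 else if p = (0,0,0) ∧ q = (2,0,0) then -2 else if p = (0,0,1) ∧ q = (0,2,1) then 1 else if p = (0,0,1) ∧ q = (1,0,2) then 2 else if p = (0,0,1) ∧ q = (2,0,1) then -1 else if p = (0,0,2) ∧ q = (0,2,2) then 1 else if p = (0,1,0) ∧ q = (0,1,2) then 1 else if p = (0,1,0) ∧ q = (1,2,0) then 2 else if p = (0,1,0) ∧ q = (2,1,0) then -1 else if p = (0,1,1) ∧ q = (1,1,2) then 2 else if p = (0,1,1) ∧ q = (1,2,1) then 2 else if p = (0,1,2) ∧ q = (1,2,2) then 2 else if p = (0,1,2) ∧ q = (2,1,2) then 1 else if p = (0,2,0) ∧ q = (0,2,2) then 1 else if p = (0,2,1) ∧ q = (1,2,2) then 2 else if p = (0,2,1) ∧ q = (2,2,1) then 1 else if p = (0,2,2) ∧ q = (2,2,2) then 2 else if p = (1,0,0) ∧ q = (2,0,1) then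 -2 else if p = (1,0,0) ∧ q = (2,1,0) then -2 else if p = (1,0,1) ∧ q = (2,1,1) then -2 else if p = (1,0,2) ∧ q = (2,1,2) then -2 else if p = (1,1,0) ∧ q = (2,1,1) then -2 else if p = (1,2,0) ∧ q = (2,2,1) then -2 else if p = (2,0,0) ∧ q = (2,0,2) then -1 else if p = (2,0,0) ∧ q = (2,2,0) then -1 else if p = (2,0,1) ∧ q = (2,2,1) then -1 else if p = (2,0,2) ∧ q = (2,2,2) then -1 else if p = (2,1,0) ∧ q = (2,1,2) then -1 else if p = (2,2,0) ∧ q = (2,2,2) then -1 else 0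
def zd2 : Matrix (Fin 3 × Fin 3 × Fin 3) (Fin 3 × Fin 3 × Fin 3) ℤ := Matrix.of fun p q =>
  if p = (0,0,0) ∧ q = (0,2,2) then 1 else if p = (0,0,0) ∧ q = (2,0,2) then 2 else if p = (0,0,1) ∧ q = (1,2,2) then 2 else if p = (0,0,1) ∧ q = (2,2,1) then 1 else if p = (0,0,2) ∧ q = (2,2,2) then 2 else if p = (0,1,0) ∧ q = (2,1,2) then 1 else if p = (0,1,0) ∧ q = (2,2,1) then -4 else if p = (1,0,0) ∧ q = (2,1,2) then 2 else if p = (2,0,0) ∧ q = (2,2,2) then 1 else 0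
def zD1 : Matrix (Fin 3 × Fin 3 × Fin 3) (Fin 3 × Fin 3 × Fin 3) ℤ := Matrix.of fun p q =>
  if p = (0,0,0) ∧ q = (0,0,2) then 2 else if p = (0,0,0) ∧ q = (0,2,0) then -1 else if p = (0,0,0) ∧ q = (2,0,0) then -1 else if p = (0,0,1) ∧ q = (0,1,2) then 2 else if p = (0,0,1) ∧ q = (1,0,2) then 2 else if p = (0,0,2) ∧ q = (0,2,2) then 1 else if p = (0,0,2) ∧ q = (2,0,2) then 1 else if p = (0,1,0) ∧ q = (0,1,2) then 1 else if p = (0,1,0) ∧ q = (0,2,1) then -2 else if p = (0,1,0) ∧ q = (2,1,0) then -1 else if p = (0,1,1) ∧ q = (1,1,2) then 2 else if p = (0,1,2) ∧ q = (2,1,2) then 1 else if p = (0,2,0) ∧ q = (2,2,0) then -1 else if p = (0,2,1) ∧ q = (1,2,2) then 2 else if p = (0,2,2) ∧ q = (2,2,2) then 1 else if p = (1,0,0) ∧ q = (1,0,2) then 1 else if p = (1,0,0) ∧ q = (1,2,0) then -1 else if p = (1,0,0) ∧ q = (2,0,1) then -2 else if p = (1,0,1) ∧ q = (1,1,2) then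 2 else if p = (1,0,2) ∧ q = (1,2,2) then 1 else if p = (1,1,0) ∧ q = (1,2,1) then -2 else if p = (1,1,0) ∧ q = (2,1,1) then -2 else if p = (1,2,0) ∧ q = (1,2,2) then -1 else if p = (1,2,0) ∧ q = (2,2,1) then -2 else if p = (2,0,0) ∧ q = (2,2,0) then -1 else if p = (2,0,1) ∧ q = (2,1,2) then 2 else if p = (2,0,2) ∧ q = (2,2,2) then 1 else if p = (2,1,0) ∧ q = (2,1,2) then -1 else if p = (2,1,0) ∧ q = (2,2,1) then -2 else if p = (2,2,0) ∧ q = (2,2,2) then -2 else 0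
def zD2 : Matrix (Fin 3 × Fin 3 × Fin 3) (Fin 3 × Fin 3 × Fin 3) ℤ := Matrix.of fun p q =>
  if p = (0,0,0) ∧ q = (2,0,2) then 2 else if p = (0,0,0) ∧ q = (2,2,0) then 1 else if p = (0,0,1) ∧ q = (2,1,2) then 2 else if p = (0,0,2) ∧ q = (2,2,2) then 1 else if p = (0,1,0) ∧ q = (1,2,2) then -4 else if p = (0,1,0) ∧ q = (2,1,2) then 1 else if p = (1,0,0) ∧ q = (1,2,2) then 1 else if p = (1,0,0) ∧ q = (2,2,1) then 2 else if p = (2,0,0) ∧ q = (2,2,2) then 2 else 0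
def zf1 : Matrix (Fin 3 × Fin 3 × Fin 3) (Fin 3 × Fin 3 × Fin 3) ℤ := Matrix.of fun p q =>
  if p = (0,0,0) ∧ q = (0,0,2) then 2 else if p = (0,0,0) ∧ q = (2,0,0) then -2 else if p = (0,0,1) ∧ q = (0,1,2) then 2 else if p = (0,0,1) ∧ q = (0,2,1) then 1 else if p = (0,0,1) ∧ q = (1,0,2) then 2 else if p = (0,0,1) ∧ q = (2,0,1) then -1 else if p = (0,0,2) ∧ q = (0,2,2) then 2 else if p = (0,1,0) ∧ q = (0,1,2) then 1 else if p = (0,1,0) ∧ q = (0,2,1) then -2 else if p = (0,1,0) ∧ q = (1,2,0) then 2 else if p = (0,1,0) ∧ q = (2,1,0) then -1 else if p = (0,1,1) ∧ q = (1,1,2) then 2 else if p = (0,1,1) ∧ q = (1,2,1) then 2 else if p = (0,1,2) ∧ q = (1,2,2) then 2 else if p = (0,1,2) ∧ q = (2,1,2) then 1 else if p = (0,2,1) ∧ q = (1,2,2) then 2 else if p = (0,2,1) ∧ q = (2,2,1) then 1 else if p = (0,2,2) ∧ q = (2,2,2) then 2 else if p = (1,0,0) ∧ q = (1,0,2) then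 1 else if p = (1,0,0) ∧ q = (1,2,0) then -1 else if p = (1,0,0) ∧ q = (2,0,1) then -2 else if p = (1,0,0) ∧ q = (2,1,0) then -2 else if p = (1,0,1) ∧ q = (1,1,2) then 2 else if p = (1,0,1) ∧ q = (2,1,1) then -2 else if p = (1,0,2) ∧ q = (1,2,2) then 1 else if p = (1,0,2) ∧ q = (2,1,2) then -2 else if p = (1,1,0) ∧ q = (1,2,1) then -2 else if p = (1,1,0) ∧ q = (2,1,1) then -2 else if p = (1,2,0) ∧ q = (1,2,2) then -1 else if p = (1,2,0) ∧ q = (2,2,1) then -2 else if p = (2,0,0) ∧ q = (2,2,0) then -2 else if p = (2,0,1) ∧ q = (2,1,2) then 2 else if p = (2,0,1) ∧ q = (2,2,1) then -1 else if p = (2,1,0) ∧ q = (2,1,2) then -1 else if p = (2,1,0) ∧ q = (2,2,1) then -2 else if p = (2,2,0) ∧ q = (2,2,2) then -2 else 0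
def zf2 : Matrix (Fin 3 × Fin 3 × Fin 3) (Fin 3 × Fin 3 × Fin 3) ℤ := Matrix.of fun p q =>
  if p = (0,0,0) ∧ q = (0,2,2) then 2 else if p = (0,0,0) ∧ q = (2,2,0) then 2 else if p = (0,0,1) ∧ q = (1,2,2) then 4 else if p = (0,0,1) ∧ q = (2,1,2) then -2 else if p = (0,0,1) ∧ q = (2,2,1) then 1 else if p = (0,0,2) ∧ q = (2,2,2) then 2 else if p = (0,1,0) ∧ q = (1,2,2) then -2 else if p = (0,1,0) ∧ q = (2,1,2) then 1 else if p = (0,1,0) ∧ q = (2,2,1) then -2 else if p = (1,0,0) ∧ q = (1,2,2) then 1 else if p = (1,0,0) ∧ q = (2,1,2) then -2 else if p = (1,0,0) ∧ q = (2,2,1) then 4 else if p = (2,0,0) ∧ q = (2,2,2) then 2 else 0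

def zp1 : Matrix I27 I27 ℤ := Matrix.of fun p q =>
  za1 (p.1, p.2.1) (q.1, q.2.1) * (if p.2.2 = q.2.2 then 1 else 0)
def zp2 : Matrix I27 I27 ℤ := Matrix.of fun p q =>
  za2 (p.1, p.2.1) (q.1, q.2.1) * (if p.2.2 = q.2.2 then 1 else 0)
def zq1 : Matrix I27 I27 ℤ := Matrix.of fun p q =>
  za1 (p.1, p.2.2) (q.1, q.2.2) * (if p.2.1 = q.2.1 then 1 else 0)
def zq2 : Matrix I27 I27 ℤ := Matrix.of fun p q =>
  za2 (p.1, p.2.2) (q.1, q.2.2) * (if p.2.1 = q.2.1 then 1 else 0)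
def zs1 : Matrix I27 I27 ℤ := Matrix.of fun p q =>
  za1 (p.2.1, p.2.2) (q.2.1, q.2.2) * (if p.1 = q.1 then 1 else 0)
def zs2 : Matrix I27 I27 ℤ := Matrix.of fun p q =>
  za2 (p.2.1, p.2.2) (q.2.1, q.2.2) * (if p.1 = q.1 then 1 else 0)

noncomputable def φm : Matrix I27 I27 ℤ →+* Matrix I27 I27 ℂ := (Int.castRingHom ℂ).mapMatrix

noncomputable def tri (h : ℂ) (a b : Matrix I27 I27 ℤ) : Matrix I27 I27 ℂ :=
  1 + h • φm a + h ^ 2 • φm b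

lemma tri_congr {h : ℂ} {a b a' b' : Matrix I27 I27 ℤ} (h1 : a = a') (h2 : b = b') :
    tri h a b = tri h a' b' := by rw [h1, h2]

lemma tri_mul (h : ℂ) (a b a' b' : Matrix I27 I27 ℤ)
    (h1 : a * b' + b * a' = 0) (h2 : b * b' = 0) :
    tri h a b * tri h a' b' = tri h (a + a') (b + b' + a * a') := by
  have H1 : φm a * φm b' = -(φm b * φm a') := by
    rw [← _root_.map_mul, ← _root_.map_mul, eq_neg_iff_add_eq_zero, ← map_add, h1, map_zero]
  have H2 : φm b * φm b' = 0 := by rw [← _root_.map_mul, h2, map_zero]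
  simp only [tri, map_add, _root_.map_mul]
  simp only [mul_add, add_mul, one_mul, mul_one, smul_mul_assoc, mul_smul_comm, smul_smul,
    H1, H2, smul_neg, smul_zero, smul_add, add_zero]
  module

section Lifts
variable (h : ℂ) (a b : Matrix (Fin 3 × Fin 3) (Fin 3 × Fin 3) ℤ)

lemma lift_gen (sel : I27 → Fin 3 × Fin 3) (rem : I27 → Fin 3)
    (hsel : ∀ p q : I27, p = q ↔ (sel p = sel q ∧ rem p = rem q)) :
    (Matrix.of fun p q : I27 =>
        ((1 : Matrix (Fin 3 × Fin 3) (Fin 3 × Fin 3) ℂ) + h • a.map (Int.cast : ℤ → ℂ)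
          + h ^ 2 • b.map (Int.cast : ℤ → ℂ)) (sel p) (sel q)
        * (if rem p = rem q then 1 else 0))
    = 1 + h • (Matrix.of fun p q : I27 =>
          a (sel p) (sel q) * (if rem p = rem q then 1 else 0)).map (Int.cast : ℤ → ℂ)
      + h ^ 2 • (Matrix.of fun p q : I27 =>
          b (sel p) (sel q) * (if rem p = rem q then 1 else 0)).map (Int.cast : ℤ → ℂ) := by
  ext p q
  simp only [Matrix.of_apply, Matrix.add_apply, Matrix.smul_apply, Matrix.one_apply,
    Matrix.map_apply, smul_eq_mul]
  by_cases hc : rem p = rem q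
  · have hiff : (p = q) ↔ (sel p = sel q) := by
      rw [hsel p q]
      simp [hc]
    simp [hc, hiff]
  · have hne : ¬ p = q := fun e => hc (by rw [e])
    simp [hc, hne]
end Lifts

lemma hy1 : zp1 * zq2 + zp2 * zq1 = 0 := by decide
lemma hy2 : zp2 * zq2 = 0 := by decide
lemma hy3 : zp1 + zq1 = zd1 := by decide
lemma hy4 : zp2 + zq2 + zp1 * zq1 = zd2 := by decide
lemma hy5 : zd1 * zs2 + zd2 * zs1 = 0 := by decide
lemma hy6 : zd2 * zs2 = 0 := by decide
lemma hy7 : zd1 + zs1 = zf1 := by decide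
lemma hy8 : zd2 + zs2 + zd1 * zs1 = zf2 := by decide
lemma hy9 : zs1 * zq2 + zs2 * zq1 = 0 := by decide
lemma hy10 : zs2 * zq2 = 0 := by decide
lemma hy11 : zs1 + zq1 = zD1 := by decide
lemma hy12 : zs2 + zq2 + zs1 * zq1 = zD2 := by decide
lemma hy13 : zD1 * zp2 + zD2 * zp1 = 0 := by decide
lemma hy14 : zD2 * zp2 = 0 := by decide
lemma hy15 : zD1 + zp1 = zf1 := by decide
lemma hy16 : zD2 + zp2 + zD1 * zp1 = zf2 := by decide

lemma m1 (h : ℂ) : tri h zp1 zp2 * tri h zq1 zq2 = tri h zd1 zd2 :=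
  (tri_mul h zp1 zp2 zq1 zq2 hy1 hy2).trans (tri_congr hy3 hy4)
lemma m2 (h : ℂ) : tri h zd1 zd2 * tri h zs1 zs2 = tri h zf1 zf2 :=
  (tri_mul h zd1 zd2 zs1 zs2 hy5 hy6).trans (tri_congr hy7 hy8)
lemma m1' (h : ℂ) : tri h zs1 zs2 * tri h zq1 zq2 = tri h zD1 zD2 :=
  (tri_mul h zs1 zs2 zq1 zq2 hy9 hy10).trans (tri_congr hy11 hy12)
lemma m2' (h : ℂ) : tri h zD1 zD2 * tri h zp1 zp2 = tri h zf1 zf2 :=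
  (tri_mul h zD1 zD2 zp1 zp2 hy13 hy14).trans (tri_congr hy15 hy16)


set_option maxHeartbeats 3000000 in
theorem stmt_15 (h : ℂ)
    (T T' e₁ e₂ e₃ h₃ : Matrix (Fin 3) (Fin 3) ℂ)
    (he₁ : e₁ = Matrix.single 0 1 1)
    (he₂ : e₂ = Matrix.single 1 2 1)
    (he₃ : e₃ = Matrix.single 0 2 1)
    (hh₃ : h₃ = Matrix.single 0 0 1 - Matrix.single 2 2 1)
    (hT : T = 1 + h • e₃) (hT' : T' = 1 - h • e₃)
    (R : Matrix (Fin 3 × Fin 3) (Fin 3 × Fin 3) ℂ)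
    (hR : R = Matrix.single 0 0 1 ⊗ₖ T + Matrix.single 1 1 1 ⊗ₖ (1 : Matrix (Fin 3) (Fin 3) ℂ)
        + Matrix.single 2 2 1 ⊗ₖ T'
        + Matrix.single 0 1 1 ⊗ₖ ((2 * h) • e₂)
        + Matrix.single 1 2 1 ⊗ₖ (-((2 * h) • e₁))
        + Matrix.single 0 2 1 ⊗ₖ (-(h • h₃) + (h ^ 2) • e₃))
    (R₁₂ R₁₃ R₂₃ : Matrix (Fin 3 × Fin 3 × Fin 3) (Fin 3 × Fin 3 × Fin 3) ℂ)
    (hR₁₂ : R₁₂ = Matrix.of fun p q =>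
        R (p.1, p.2.1) (q.1, q.2.1) * (if p.2.2 = q.2.2 then 1 else 0))
    (hR₁₃ : R₁₃ = Matrix.of fun p q =>
        R (p.1, p.2.2) (q.1, q.2.2) * (if p.2.1 = q.2.1 then 1 else 0))
    (hR₂₃ : R₂₃ = Matrix.of fun p q =>
        R (p.2.1, p.2.2) (q.2.1, q.2.2) * (if p.1 = q.1 then 1 else 0)) :
    R₁₂ * R₁₃ * R₂₃ = R₂₃ * R₁₃ * R₁₂ := by
  have hRd : R = 1 + h • (za1.map (Int.cast : ℤ → ℂ)) + h ^ 2 • (za2.map (Int.cast : ℤ → ℂ)) := by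
    subst he₁ he₂ he₃ hh₃ hT hT' hR
    ext ⟨pa, pb⟩ ⟨qa, qb⟩
    fin_cases pa <;> fin_cases pb <;> fin_cases qa <;> fin_cases qb <;>
      norm_num [Matrix.single_apply, za1, za2, Matrix.one_apply, Prod.mk.injEq,
        kroneckerMap_apply, Fin.ext_iff, -Prod.mk_zero_zero, -Prod.mk_one_one] <;>
      ring
  have e12 : R₁₂ = tri h zp1 zp2 := by
    rw [hR₁₂, hRd, lift_gen h za1 za2 (fun p => (p.1, p.2.1)) (fun p => p.2.2)
      (by intro p q; simp [Prod.ext_iff]; tauto)]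
    simp only [tri, φm, RingHom.mapMatrix_apply, zp1, zp2, Int.coe_castRingHom]
  have e13 : R₁₃ = tri h zq1 zq2 := by
    rw [hR₁₃, hRd, lift_gen h za1 za2 (fun p => (p.1, p.2.2)) (fun p => p.2.1)
      (by intro p q; simp [Prod.ext_iff]; tauto)]
    simp only [tri, φm, RingHom.mapMatrix_apply, zq1, zq2, Int.coe_castRingHom]
  have e23 : R₂₃ = tri h zs1 zs2 := by
    rw [hR₂₃, hRd, lift_gen h za1 za2 (fun p => (p.2.1, p.2.2)) (fun p => p.1)
      (by intro p q; simp [Prod.ext_iff]; tauto)]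
    simp only [tri, φm, RingHom.mapMatrix_apply, zs1, zs2, Int.coe_castRingHom]
  rw [e12, e13, e23, m1, m2, m1', m2']
end

section
/- Let A be an associative ℚ-algebra and let e, h ∈ A satisfy [h, e] = 2e. In A[[t]], define S = Σ_{n≥0} C(1/2, n) t^{2n} e^{2n}, T = t·e + S, and H = S·h. Then [H, T] = T² − 1. -/
open PowerSeries

section Aux

variable {A : Type*} [Ring A] [Algebra ℚ A]

/-- Even-supported diagonal series `Σ a n • t^(2n) e^(2n)`. -/
noncomputable def dseq (e : A) (a : ℕ → ℚ) : PowerSeries A :=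
  PowerSeries.mk fun m => if m % 2 = 0 then a (m / 2) • e ^ m else 0

lemma sum_range_even {M : Type*} [AddCommMonoid M] (n : ℕ) (f : ℕ → M)
    (hf : ∀ p, p % 2 = 1 → f p = 0) :
    ∑ p ∈ Finset.range (2 * n + 1), f p = ∑ k ∈ Finset.range (n + 1), f (2 * k) := by
  induction n with
  | zero => simp
  | succ n ih =>
    rw [show 2 * (n + 1) + 1 = (2 * n + 1) + 1 + 1 by ring, Finset.sum_range_succ,
      Finset.sum_range_succ, ih, hf (2 * n + 1) (by omega), Finset.sum_range_succ,
      show 2 * n + 1 + 1 = 2 * (n + 1) by ring, add_zero, Finset.sum_range_succ,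
      Finset.sum_range_succ]

lemma dseq_mul (e : A) (a b : ℕ → ℚ) :
    dseq e a * dseq e b = dseq e (fun n => ∑ k ∈ Finset.range (n + 1), a k * b (n - k)) := by
  ext m
  rw [PowerSeries.coeff_mul, Finset.Nat.sum_antidiagonal_eq_sum_range_succ_mk]
  simp only [dseq, PowerSeries.coeff_mk]
  rcases Nat.mod_two_eq_zero_or_one m with he | ho
  · obtain ⟨n, rfl⟩ : ∃ n, m = 2 * n := ⟨m / 2, by omega⟩
    rw [if_pos (by omega : 2 * n % 2 = 0), show 2 * n / 2 = n by omega, Finset.sum_smul,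
      sum_range_even]
    · refine Finset.sum_congr rfl fun k hk => ?_
      have hk' : k ≤ n := by
        have := Finset.mem_range.mp hk; omega
      rw [if_pos (by omega : 2 * k % 2 = 0), show 2 * k / 2 = k by omega,
        show 2 * n - 2 * k = 2 * (n - k) by omega,
        if_pos (by omega : 2 * (n - k) % 2 = 0), show 2 * (n - k) / 2 = n - k by omega,
        smul_mul_assoc, mul_smul_comm, smul_smul, ← pow_add,
        show 2 * k + 2 * (n - k) = 2 * n by omega]
    · intro p hp
      rw [if_neg (by omega), zero_mul]
  · rw [if_neg (by omega)]
    refine Finset.sum_eq_zero fun p hp => ?_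
    have hpm : p < m + 1 := Finset.mem_range.mp hp
    rcases Nat.mod_two_eq_zero_or_one p with h1 | h1
    · rw [if_neg (show ¬ (m - p) % 2 = 0 by omega), mul_zero]
    · rw [if_neg (by omega), zero_mul]

lemma dseq_C_comm (e : A) (a : ℕ → ℚ) :
    dseq e a * PowerSeries.C e = PowerSeries.C e * dseq e a := by
  ext m
  rw [PowerSeries.coeff_mul_C, PowerSeries.coeff_C_mul]
  simp only [dseq, PowerSeries.coeff_mk]
  split_ifs with h
  · rw [smul_mul_assoc, mul_smul_comm, ← pow_succ, ← pow_succ']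
  · simp

lemma comm_pow (e h : A) (hcomm : h * e - e * h = 2 * e) (m : ℕ) :
    h * e ^ m = e ^ m * h + (2 * (m : ℚ)) • e ^ m := by
  have h2 : (2 : ℚ) • e = 2 * e := by
    rw [Algebra.smul_def, map_ofNat]
  have hhe : h * e = e * h + (2 : ℚ) • e := by
    rw [h2, ← hcomm]; abel
  induction m with
  | zero => simp
  | succ m ih =>
    calc h * e ^ (m + 1) = (h * e ^ m) * e := by rw [pow_succ, mul_assoc]
      _ = (e ^ m * h + (2 * (m : ℚ)) • e ^ m) * e := by rw [ih]
      _ = e ^ m * (h * e) + (2 * (m : ℚ)) • (e ^ m * e) := by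
          rw [add_mul, mul_assoc, smul_mul_assoc]
      _ = e ^ m * (e * h) + (2 : ℚ) • (e ^ m * e) + (2 * (m : ℚ)) • (e ^ m * e) := by
          rw [hhe, mul_add, mul_smul_comm]
      _ = e ^ (m + 1) * h + (2 * ((m : ℚ) + 1)) • e ^ (m + 1) := by
          rw [pow_succ, ← mul_assoc]; module
      _ = e ^ (m + 1) * h + (2 * ((m + 1 : ℕ) : ℚ)) • e ^ (m + 1) := by push_cast; ring_nf

lemma coeff_XXC (r : A) (m : ℕ) :
    (PowerSeries.coeff m) (X * (X * PowerSeries.C r)) = if m = 2 then r else 0 := by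
  rw [show (X : A⟦X⟧) * (X * PowerSeries.C r) = X ^ 2 * PowerSeries.C r by
    rw [pow_two, mul_assoc], PowerSeries.coeff_mul_C, PowerSeries.coeff_X_pow, ite_mul,
    one_mul, zero_mul]

end Aux

section QFacts

lemma desc_prod (q : ℚ) (k : ℕ) :
    (descPochhammer ℤ k).smeval q = ∏ i ∈ Finset.range k, (q - i) := by
  induction k with
  | zero => simp [descPochhammer_zero]
  | succ k ih =>
    rw [descPochhammer_succ_right, Polynomial.smeval_mul, ih, Finset.prod_range_succ,
      Polynomial.smeval_sub, Polynomial.smeval_X, Polynomial.smeval_natCast]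
    simp

lemma cq (c : ℕ → ℚ)
    (hc : ∀ n, c n = (∏ i ∈ Finset.range n, ((1 : ℚ) / 2 - i)) / n.factorial) (k : ℕ) :
    c k = Ring.choose (1 / 2 : ℚ) k := by
  have h := Ring.descPochhammer_eq_factorial_smul_choose (1 / 2 : ℚ) k
  rw [desc_prod] at h
  rw [hc, h, nsmul_eq_mul]
  field_simp

lemma L1 (c : ℕ → ℚ)
    (hc : ∀ n, c n = (∏ i ∈ Finset.range n, ((1 : ℚ) / 2 - i)) / n.factorial) (n : ℕ) :
    ∑ k ∈ Finset.range (n + 1), c k * c (n - k)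
      = if n = 0 then 1 else if n = 1 then 1 else 0 := by
  have h := Ring.add_choose_eq (r := (1 / 2 : ℚ)) (s := (1 / 2 : ℚ)) n (Commute.all _ _)
  rw [Finset.Nat.sum_antidiagonal_eq_sum_range_succ_mk] at h
  rw [show (1 / 2 + 1 / 2 : ℚ) = ((1 : ℕ) : ℚ) by norm_num, Ring.choose_natCast] at h
  have hs : ∑ k ∈ Finset.range (n + 1), c k * c (n - k)
      = ((Nat.choose 1 n : ℕ) : ℚ) := by
    rw [h]
    exact Finset.sum_congr rfl fun k _ => by rw [cq c hc, cq c hc]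
  rw [hs]
  rcases n with _ | _ | n
  · simp
  · simp
  · rw [Nat.choose_eq_zero_of_lt (by omega)]
    simp

lemma L2 (c : ℕ → ℚ)
    (hc : ∀ n, c n = (∏ i ∈ Finset.range n, ((1 : ℚ) / 2 - i)) / n.factorial) (n : ℕ) :
    ∑ k ∈ Finset.range (n + 1), c k * (4 * ((n - k : ℕ) : ℚ) * c (n - k))
      = if n = 1 then 2 else 0 := by
  set S' := ∑ k ∈ Finset.range (n + 1), ((n - k : ℕ) : ℚ) * (c k * c (n - k)) with hS'
  have hrefl : S' = ∑ k ∈ Finset.range (n + 1), ((k : ℕ) : ℚ) * (c k * c (n - k)) := by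
    rw [hS', ← Finset.sum_range_reflect]
    refine Finset.sum_congr rfl fun k hk => ?_
    have hk' : k ≤ n := by have := Finset.mem_range.mp hk; omega
    rw [show n + 1 - 1 - k = n - k by omega, show n - (n - k) = k by omega,
      mul_comm (c (n - k)) (c k)]
  have hsum : S' + S' = (n : ℚ) * (if n = 0 then 1 else if n = 1 then 1 else 0) := by
    nth_rewrite 2 [hrefl]
    rw [← Finset.sum_add_distrib, ← L1 c hc n, Finset.mul_sum]
    refine Finset.sum_congr rfl fun k hk => ?_
    have hk' : k ≤ n := by have := Finset.mem_range.mp hk; omega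
    rw [← add_mul]
    congr 1
    push_cast [Nat.cast_sub hk']
    ring
  have htgt : ∑ k ∈ Finset.range (n + 1), c k * (4 * ((n - k : ℕ) : ℚ) * c (n - k))
      = 4 * S' := by
    rw [hS', Finset.mul_sum]
    exact Finset.sum_congr rfl fun k _ => by ring
  rw [htgt]
  rcases n with _ | _ | n
  · simp at hsum ⊢; linarith
  · norm_num at hsum ⊢; linarith
  · have : (n + 1 + 1 : ℕ) ≠ 0 ∧ (n + 1 + 1 : ℕ) ≠ 1 := by omega
    rw [if_neg this.1, if_neg this.2, mul_zero] at hsum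
    rw [if_neg this.2]
    linarith

end QFacts

theorem stmt_17 {A : Type*} [Ring A] [Algebra ℚ A] (e h : A)
    (hcomm : h * e - e * h = 2 * e)
    (c : ℕ → ℚ)
    (hc : ∀ n, c n = (∏ i ∈ Finset.range n, ((1 : ℚ) / 2 - i)) / n.factorial)
    (S T H : PowerSeries A)
    (hS : S = PowerSeries.mk fun m => if m % 2 = 0 then c (m / 2) • e ^ m else 0)
    (hT : T = PowerSeries.X * PowerSeries.C e + S)
    (hH : H = S * PowerSeries.C h) :
    H * T - T * H = T * T - 1 := by
  subst hT hH
  have hS' : S = dseq e c := hS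
  set D4 : PowerSeries A := dseq e (fun n => 4 * (n : ℚ) * c n) with hD4
  -- commutation with X
  have hXCe : PowerSeries.C e * X = X * PowerSeries.C e := (PowerSeries.commute_X _).eq
  have hXCe' : ∀ f : PowerSeries A, PowerSeries.C e * (X * f) = X * (PowerSeries.C e * f) :=
    fun f => by rw [← mul_assoc, hXCe, mul_assoc]
  have hXS : S * X = X * S := (PowerSeries.commute_X _).eq
  have hXS' : ∀ f : PowerSeries A, S * (X * f) = X * (S * f) :=
    fun f => by rw [← mul_assoc, hXS, mul_assoc]
  have hXCh : PowerSeries.C h * X = X * PowerSeries.C h := (PowerSeries.commute_X _).eq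
  have hXCh' : ∀ f : PowerSeries A, PowerSeries.C h * (X * f) = X * (PowerSeries.C h * f) :=
    fun f => by rw [← mul_assoc, hXCh, mul_assoc]
  -- S commutes with C e
  have hCeS : S * PowerSeries.C e = PowerSeries.C e * S := by
    rw [hS']; exact dseq_C_comm e c
  have hCeS' : ∀ f : PowerSeries A, S * (PowerSeries.C e * f) = PowerSeries.C e * (S * f) :=
    fun f => by rw [← mul_assoc, hCeS, mul_assoc]
  -- C h past C e
  have hChCe : PowerSeries.C h * PowerSeries.C e
      = PowerSeries.C e * PowerSeries.C h + (PowerSeries.C e + PowerSeries.C e) := by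
    rw [← map_mul, ← map_mul, ← map_add, ← map_add]
    congr 1
    have : h * e = 2 * e + e * h := by rw [← hcomm]; abel
    rw [this]
    rw [two_mul]; abel
  have hChCe' : ∀ f : PowerSeries A, PowerSeries.C h * (PowerSeries.C e * f)
      = PowerSeries.C e * (PowerSeries.C h * f) + (PowerSeries.C e * f
        + PowerSeries.C e * f) :=
    fun f => by rw [← mul_assoc, hChCe, add_mul, add_mul, mul_assoc]
  -- C h past S
  have hChS : PowerSeries.C h * S = S * PowerSeries.C h + D4 := by
    rw [hS', hD4]
    ext m
    rw [map_add, PowerSeries.coeff_C_mul, PowerSeries.coeff_mul_C]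
    simp only [dseq, PowerSeries.coeff_mk]
    rcases Nat.mod_two_eq_zero_or_one m with he | ho
    · obtain ⟨n, rfl⟩ : ∃ n, m = 2 * n := ⟨m / 2, by omega⟩
      have h0 : 2 * n % 2 = 0 := by omega
      simp only [if_pos h0, show 2 * n / 2 = n by omega]
      rw [mul_smul_comm, comm_pow e h hcomm, smul_mul_assoc]
      push_cast
      module
    · simp [if_neg (by omega : ¬ m % 2 = 0)]
  have hChS' : ∀ f : PowerSeries A, PowerSeries.C h * (S * f)
      = S * (PowerSeries.C h * f) + D4 * f :=
    fun f => by rw [← mul_assoc, hChS, add_mul, mul_assoc]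
  -- S * S
  have hCeCe : PowerSeries.C e * PowerSeries.C e = PowerSeries.C (e ^ 2) := by
    rw [← map_mul, ← pow_two]
  have hSS : S * S = 1 + X * (X * PowerSeries.C (e ^ 2)) := by
    rw [hS', dseq_mul]
    have hfun : (fun n => ∑ k ∈ Finset.range (n + 1), c k * c (n - k))
        = fun n => if n = 0 then (1 : ℚ) else if n = 1 then 1 else 0 :=
      funext (L1 c hc)
    rw [hfun]
    ext m
    rw [map_add, PowerSeries.coeff_one, coeff_XXC]
    simp only [dseq, PowerSeries.coeff_mk]
    rcases Nat.lt_or_ge m 3 with hm | hm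
    · interval_cases m <;> norm_num
    · rw [if_neg (by omega : ¬ m = 0), if_neg (by omega : ¬ m = 2), add_zero]
      split_ifs with h1 h2 h3
      · omega
      · omega
      · exact zero_smul ℚ _
      · rfl
  have hSS' : ∀ f : PowerSeries A, S * (S * f)
      = f + X * (X * (PowerSeries.C (e ^ 2) * f)) :=
    fun f => by rw [← mul_assoc, hSS, add_mul, one_mul, mul_assoc, mul_assoc]
  -- S * D4
  have hSD4 : S * D4 = X * (X * PowerSeries.C (e ^ 2))
      + X * (X * PowerSeries.C (e ^ 2)) := by
    rw [hS', hD4, dseq_mul]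
    have hfun : (fun n => ∑ k ∈ Finset.range (n + 1), c k * (4 * ((n - k : ℕ) : ℚ) * c (n - k)))
        = fun n => if n = 1 then (2 : ℚ) else 0 :=
      funext (L2 c hc)
    rw [hfun]
    ext m
    rw [map_add, coeff_XXC]
    simp only [dseq, PowerSeries.coeff_mk]
    rcases Nat.lt_or_ge m 3 with hm | hm
    · interval_cases m <;> norm_num [two_smul]
    · rw [if_neg (by omega : ¬ m = 2), add_zero]
      split_ifs with h1 h2
      · omega
      · exact zero_smul ℚ _
      · rfl
  have hSD4' : ∀ f : PowerSeries A, S * (D4 * f)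
      = X * (X * (PowerSeries.C (e ^ 2) * f)) + X * (X * (PowerSeries.C (e ^ 2) * f)) :=
    fun f => by rw [← mul_assoc, hSD4, add_mul]; simp only [mul_assoc]
  simp only [mul_add, add_mul, mul_assoc, hXCe, hXCe', hXS, hXS', hXCh, hXCh', hCeS, hCeS',
    hChCe, hChCe', hChS, hChS', hCeCe, hSS, hSS', hSD4, hSD4']
  abel
end

section
/- Let A be an associative ℚ-algebra and let e, h ∈ A satisfy [h, e] = 2e. In A[[t]], define S = Σ_{n≥0} C(1/2, n) t^{2n} e^{2n}, H = S·h, and let G = Σ_{n≥0} (−1)ⁿ (2n)!/(4ⁿ (n!)² (2n+1)) t^{2n} e^{2n+1} (the formal arcsinh series, so that t·G = arcsinh(t·e)). Then [H, G] = 2e. -/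
open PowerSeries

private lemma descPoch_smeval_rat (r : ℚ) : ∀ n : ℕ,
    (descPochhammer ℤ n).smeval r = ∏ i ∈ Finset.range n, (r - i)
  | 0 => by simp [descPochhammer_zero, Polynomial.smeval_one]
  | (n+1) => by
    rw [descPochhammer_succ_right, Polynomial.smeval_mul, descPoch_smeval_rat r n,
      Finset.prod_range_succ]
    congr 1
    simp [Polynomial.smeval_sub, Polynomial.smeval_X, Polynomial.smeval_natCast]

private lemma ring_choose_rat (r : ℚ) (n : ℕ) :
    Ring.choose r n = (∏ i ∈ Finset.range n, (r - i)) / n.factorial := by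
  have h := Ring.descPochhammer_eq_factorial_smul_choose (R := ℚ) r n
  rw [descPoch_smeval_rat, nsmul_eq_mul] at h
  have : (n.factorial : ℚ) ≠ 0 := by positivity
  field_simp [h]
  rw [h]; ring

private lemma key_sum (c d : ℕ → ℚ)
    (hc : ∀ n, c n = (∏ i ∈ Finset.range n, ((1:ℚ)/2 - i)) / n.factorial)
    (hd : ∀ n, d n = (∏ i ∈ Finset.range n, (-(1:ℚ)/2 - i)) / n.factorial)
    (N : ℕ) :
    ∑ a ∈ Finset.range (N+1), c a * d (N - a) = if N = 0 then 1 else 0 := by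
  have hv := Ring.add_choose_eq (r := (1:ℚ)/2) (s := -(1:ℚ)/2) N (Commute.all _ _)
  rw [show (1:ℚ)/2 + -(1:ℚ)/2 = 0 by norm_num, Ring.choose_zero_ite,
    Finset.Nat.sum_antidiagonal_eq_sum_range_succ_mk] at hv
  rw [hv]
  refine (Finset.sum_congr rfl fun a _ => ?_).symm
  rw [hc, hd, ring_choose_rat, ring_choose_rat]

private lemma prod_neg_half : ∀ n : ℕ,
    ∏ i ∈ Finset.range n, (-(1:ℚ)/2 - i) = (-1)^n * (2*n).factorial / (4^n * n.factorial)
  | 0 => by simp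
  | (n+1) => by
    rw [Finset.prod_range_succ, prod_neg_half n]
    have h1 : ((n.factorial : ℚ)) ≠ 0 := by positivity
    have h2 : ((4:ℚ)^n) ≠ 0 := by positivity
    have h3 : ((2*n).factorial : ℚ) ≠ 0 := by positivity
    have e1 : (((n+1).factorial : ℕ) : ℚ) = (n+1) * n.factorial := by
      rw [Nat.factorial_succ]; push_cast; ring
    have e2 : (((2*(n+1)).factorial : ℕ) : ℚ) = (2*n+2)*((2*n+1)*(2*n).factorial) := by
      have h : 2*(n+1) = (2*n+1)+1 := by ring
      rw [h, Nat.factorial_succ, Nat.factorial_succ]; push_cast; ring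
    rw [e1, e2]
    field_simp
    ring

private lemma sum_even {M : Type*} [AddCommMonoid M] (T : ℕ → M)
    (hT : ∀ k, T (2*k+1) = 0) :
    ∀ n, ∑ k ∈ Finset.range (2*n+1), T k = ∑ a ∈ Finset.range (n+1), T (2*a)
  | 0 => by simp
  | (n+1) => by
    rw [show 2*(n+1)+1 = (2*n+1) + 1 + 1 by ring, Finset.sum_range_succ, Finset.sum_range_succ,
      sum_even T hT n, hT n, add_zero, show 2*n+1+1 = 2*(n+1) by ring,
      ← Finset.sum_range_succ (fun a => T (2*a)) (n+1)]

private lemma term_eq {A : Type*} [Ring A] [Algebra ℚ A] (e h : A)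
    (he : ∀ k : ℕ, h * e ^ k = e ^ k * h + (2 * k : ℚ) • e ^ k) (q r : ℚ) (a b : ℕ) :
    ((q • e^(2*a)) * h) * (r • e^(2*b+1)) - (r • e^(2*b+1)) * ((q • e^(2*a)) * h)
      = (q * (r * (2*(2*(b:ℚ)+1)))) • e^(2*(a+b)+1) := by
  rw [smul_mul_assoc, smul_mul_assoc, mul_smul_comm, mul_smul_comm, mul_assoc (e^(2*a)), he,
    mul_add, mul_smul_comm]
  simp only [smul_mul_assoc, ← mul_assoc, ← pow_add]
  rw [show 2*a+(2*b+1) = 2*(a+b)+1 by ring, show 2*b+1+(2*a) = 2*(a+b)+1 by ring]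
  push_cast
  module

theorem stmt_18 {A : Type*} [Ring A] [Algebra ℚ A] (e h : A)
    (hcomm : h * e - e * h = 2 * e)
    (c g : ℕ → ℚ)
    (hc : ∀ n, c n = (∏ i ∈ Finset.range n, ((1 : ℚ) / 2 - i)) / n.factorial)
    (hg : ∀ n, g n = (-1) ^ n * (2 * n).factorial /
        (4 ^ n * (n.factorial : ℚ) ^ 2 * (2 * n + 1)))
    (S H G : PowerSeries A)
    (hS : S = PowerSeries.mk fun m => if m % 2 = 0 then c (m / 2) • e ^ m else 0)
    (hH : H = S * PowerSeries.C h)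
    (hG : G = PowerSeries.mk fun m => if m % 2 = 0 then g (m / 2) • e ^ (m + 1) else 0) :
    H * G - G * H = PowerSeries.C (2 * e) := by
  -- the commutation rule
  have he : ∀ k : ℕ, h * e ^ k = e ^ k * h + (2 * k : ℚ) • e ^ k := by
    have h2 : h * e = e * h + (2:ℚ) • e := by
      have ht : (2:ℚ) • e = 2 * e := by rw [two_smul, two_mul]
      rw [ht, ← hcomm]; abel
    intro k
    induction k with
    | zero => simp
    | succ k ih =>
      rw [pow_succ, ← mul_assoc, ih, add_mul, smul_mul_assoc, mul_assoc, h2, mul_add,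
        mul_smul_comm, ← mul_assoc, ← pow_succ]
      push_cast
      module
  -- the d-sequence (coefficients of (1+x)^{-1/2})
  set d : ℕ → ℚ := fun n => g n * (2*n+1) with hd_def
  have hd : ∀ n, d n = (∏ i ∈ Finset.range n, (-(1:ℚ)/2 - i)) / n.factorial := by
    intro n
    rw [hd_def]
    simp only
    rw [hg, prod_neg_half n]
    have h1 : ((n.factorial : ℚ)) ≠ 0 := by positivity
    have h2 : ((4:ℚ)^n) ≠ 0 := by positivity
    have h4 : ((2:ℚ)*n+1) ≠ 0 := by positivity
    field_simp
  have hkey := key_sum c d hc hd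
  -- rewrite H as a single mk
  have hH' : H = PowerSeries.mk fun m =>
      (if m % 2 = 0 then c (m / 2) • e ^ m else 0) * h := by
    rw [hH, hS]
    ext i
    rw [PowerSeries.coeff_mul_C, PowerSeries.coeff_mk, PowerSeries.coeff_mk]
  clear hH hS
  subst hG hH'
  ext m
  rw [map_sub, PowerSeries.coeff_mul, PowerSeries.coeff_mul,
    Finset.Nat.sum_antidiagonal_eq_sum_range_succ_mk,
    Finset.Nat.sum_antidiagonal_eq_sum_range_succ_mk]
  simp only [PowerSeries.coeff_mk, PowerSeries.coeff_C]
  rcases Nat.even_or_odd m with hm | hm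
  · -- even case
    obtain ⟨N, hN⟩ := hm
    have hN2 : m = 2 * N := by omega
    subst hN2
    rw [sum_even _ (fun k => by
        rw [if_neg (by omega : ¬ (2*k+1) % 2 = 0), zero_mul, zero_mul]) N,
      sum_even _ (fun k => by
        rw [if_neg (by omega : ¬ (2*k+1) % 2 = 0), zero_mul]) N,
      ← Finset.sum_range_reflect (fun a =>
        (if (2*a) % 2 = 0 then g ((2*a) / 2) • e ^ (2*a + 1) else 0) *
          ((if (2*N - 2*a) % 2 = 0 then c ((2*N - 2*a) / 2) • e ^ (2*N - 2*a) else 0) * h)) (N+1),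
      ← Finset.sum_sub_distrib]
    have hterm : ∀ a ∈ Finset.range (N+1),
        ((if (2*a) % 2 = 0 then c ((2*a) / 2) • e ^ (2*a) else 0) * h) *
            (if (2*N - 2*a) % 2 = 0 then g ((2*N - 2*a) / 2) • e ^ (2*N - 2*a + 1) else 0) -
          (if (2*(N+1-1-a)) % 2 = 0 then g ((2*(N+1-1-a)) / 2) • e ^ (2*(N+1-1-a) + 1) else 0) *
            ((if (2*N - 2*(N+1-1-a)) % 2 = 0 then
              c ((2*N - 2*(N+1-1-a)) / 2) • e ^ (2*N - 2*(N+1-1-a)) else 0) * h)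
        = (2 * (c a * d (N - a))) • e ^ (2*N+1) := by
      intro a ha
      have haN : a ≤ N := by simpa [Nat.lt_succ_iff] using Finset.mem_range.mp ha
      have e1 : N + 1 - 1 - a = N - a := by omega
      have e2 : 2 * N - 2 * a = 2 * (N - a) := by omega
      have e3 : 2 * N - 2 * (N - a) = 2 * a := by omega
      rw [e1, e2, e3]
      have m1 : 2 * a % 2 = 0 := by omega
      have m2 : 2 * (N - a) % 2 = 0 := by omega
      have d1 : 2 * a / 2 = a := by omega
      have d2 : 2 * (N - a) / 2 = N - a := by omega
      simp only [if_pos m1, if_pos m2, d1, d2]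
      rw [term_eq e h he (c a) (g (N - a)) a (N - a), show a + (N - a) = N by omega]
      congr 1
      rw [hd_def]
      push_cast
      ring
    rw [Finset.sum_congr rfl hterm, ← Finset.sum_smul, ← Finset.mul_sum, hkey N]
    by_cases hN0 : N = 0
    · subst hN0
      norm_num
      rw [two_smul, ← two_mul]
    · rw [if_neg hN0, if_neg (by omega : ¬ 2 * N = 0), mul_zero, zero_smul]
  · -- odd case
    obtain ⟨N, hN⟩ := hm
    subst hN
    rw [if_neg (by omega : ¬ (2*N+1) = 0)]
    have z1 : ∀ k ∈ Finset.range (2*N+1+1),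
        ((if k % 2 = 0 then c (k / 2) • e ^ k else 0) * h) *
          (if (2*N+1 - k) % 2 = 0 then g ((2*N+1 - k) / 2) • e ^ (2*N+1 - k + 1) else 0) = 0 := by
      intro k hk
      have hk' : k ≤ 2*N+1 := by simpa [Nat.lt_succ_iff] using Finset.mem_range.mp hk
      rcases Nat.even_or_odd k with ⟨j, hj⟩ | ⟨j, hj⟩
      · rw [if_neg (by omega : ¬ (2*N+1-k) % 2 = 0), mul_zero]
      · rw [if_neg (by omega : ¬ k % 2 = 0), zero_mul, zero_mul]
    have z2 : ∀ k ∈ Finset.range (2*N+1+1),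
        (if k % 2 = 0 then g (k / 2) • e ^ (k + 1) else 0) *
          ((if (2*N+1 - k) % 2 = 0 then c ((2*N+1 - k) / 2) • e ^ (2*N+1 - k) else 0) * h) = 0 := by
      intro k hk
      have hk' : k ≤ 2*N+1 := by simpa [Nat.lt_succ_iff] using Finset.mem_range.mp hk
      rcases Nat.even_or_odd k with ⟨j, hj⟩ | ⟨j, hj⟩
      · rw [if_neg (by omega : ¬ (2*N+1-k) % 2 = 0), zero_mul, mul_zero]
      · rw [if_neg (by omega : ¬ k % 2 = 0), zero_mul]
    rw [Finset.sum_eq_zero z1, Finset.sum_eq_zero z2, sub_zero]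
end
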